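/- Consider the appraisal dynamics ȧ_{ij} = a_{ij}(p_j(t) − ∑ₖ a_{ik} p_k(t)) with A(t) having strictly positive diagonal and positive entries along a directed cycle r = (r₁ → r₂ → … → r_m → r₁) of distinct nodes. Then the quantity c_r(t) = ∏_{(i,j)∈r} a_{ii}(t)/a_{ij}(t) is constant in time: d/dt c_r(t) = 0. -/

import Mathlib

/-- Along any directed cycle of distinct nodes with positive edges, the cycle
quantity c_r(t) = ∏_{(i,j)∈r} a_{ii}(t)/a_{ij}(t) is conserved under the
replicator appraisal dynamics. -/
theorem stmt_8 (n m : ℕ) [NeZero m] (hm : 2 ≤ m)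
    (A : ℝ → Matrix (Fin n) (Fin n) ℝ) (p : ℝ → Fin n → ℝ)
    (hderiv : ∀ t i j, HasDerivAt (fun s => A s i j)
      (A t i j * (p t j - ∑ k, A t i k * p t k)) t)
    (r : Fin m → Fin n) (hr : Function.Injective r)
    (hdiag : ∀ t i, 0 < A t i i)
    (hedge : ∀ t (l : Fin m), 0 < A t (r l) (r (l + 1))) :
    ∀ t, HasDerivAt
      (fun s => ∏ l : Fin m, A s (r l) (r l) / A s (r l) (r (l + 1)))
      0 t := by
  intro t
  set f : Fin m → ℝ → ℝ := fun l s => A s (r l) (r l) / A s (r l) (r (l + 1))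
  set f' : Fin m → ℝ := fun l => f l t * (p t (r l) - p t (r (l + 1)))
  have hfl : ∀ l, HasDerivAt (f l) (f' l) t := by
    intro l
    have hne : A t (r l) (r (l + 1)) ≠ 0 := (hedge t l).ne'
    have h := (hderiv t (r l) (r l)).fun_div (hderiv t (r l) (r (l + 1))) hne
    convert h using 1
    · rfl
    · rfl
    simp only [f', f]
    field_simp
    ring
  have h := HasDerivAt.fun_finsetProd (u := Finset.univ) (f := f) (f' := f') (fun l _ => hfl l)
  have key : (∑ l : Fin m, (∏ j ∈ Finset.univ.erase l, f j t) • f' l) = 0 := by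
    have h1 : ∀ l : Fin m, (∏ j ∈ Finset.univ.erase l, f j t) • f' l
        = (∏ j : Fin m, f j t) * (p t (r l) - p t (r (l + 1))) := by
      intro l
      have := Finset.prod_erase_mul Finset.univ (fun j => f j t) (Finset.mem_univ l)
      simp only [smul_eq_mul, f']
      rw [← this]
      ring
    rw [Finset.sum_congr rfl (fun l _ => h1 l), ← Finset.mul_sum]
    have : (∑ l : Fin m, (p t (r l) - p t (r (l + 1)))) = 0 := by
      rw [Finset.sum_sub_distrib]
      have := Fintype.sum_equiv (Equiv.addRight (1 : Fin m))
        (fun l => p t (r (l + 1))) (fun l => p t (r l)) (fun l => rfl)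
      rw [this, sub_self]
    rw [this, mul_zero]
  rw [key] at h
  exact h
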